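/- Let m, n be positive integers, B an m×n real matrix with full column rank, Q ∈ ℝ^m, P* = (BᵀB)⁻¹BᵀQ, r* = BP* − Q, and MSEuw = (1/m)∑_{i=1}^m (r*_i)². Assume the entries of r* do not all have the same absolute value. Then at the point (P*, μ*, w*) = (P*, 0, (1/m, …, 1/m)) with parameter E = MSEuw, the Jacobian blocks satisfy dᵀ = 2(r*)ᵀB = 0ᵀ and D = 0, and the Gauss–Seidel iteration matrix G = −L⁻¹U has bottom-right block G33 = 0; consequently G is nilpotent and its spectral radius is 0. -/

import Mathlib

open Matrix Finset

/-- The row-vector block `dᵀ = (2 r ⊙ ((1+μE)u − μ r²) ⊙ e^{−μ r²})ᵀ B` of the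
Jacobian `J_F`, with `r = BP − Q`. -/
noncomputable def jacd (m n : ℕ) (B : Matrix (Fin m) (Fin n) ℝ) (Q : Fin m → ℝ)
    (E : ℝ) (P : Fin n → ℝ) (μ : ℝ) : Fin n → ℝ :=
  let r := B.mulVec P - Q
  Matrix.vecMul (fun i => 2 * r i * ((1 + μ * E) - μ * (r i) ^ 2)
    * Real.exp (-μ * (r i) ^ 2)) B

/-- The block `D = (2μ/σ) diag(e^{−μ r²})((1/σ) diag(r) − u (r ⊙ e^{−μ r²})ᵀ) B`
of the Jacobian `J_F`, with `r = BP − Q` and `σ = ∑ i, e^{−μ r_i²}`. -/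
noncomputable def jacD (m n : ℕ) (B : Matrix (Fin m) (Fin n) ℝ) (Q : Fin m → ℝ)
    (P : Fin n → ℝ) (μ : ℝ) : Matrix (Fin m) (Fin n) ℝ :=
  let r := B.mulVec P - Q
  let σ : ℝ := ∑ i : Fin m, Real.exp (-μ * (r i) ^ 2)
  (2 * μ / σ) • ((Matrix.diagonal fun i => Real.exp (-μ * (r i) ^ 2)) *
    ((1 / σ) • Matrix.diagonal r -
      Matrix.vecMulVec (fun _ => (1 : ℝ))
        (fun j => r j * Real.exp (-μ * (r j) ^ 2))) * B)

/-- The block lower-triangular part `L = [[A, 0, 0], [dᵀ, s, 0], [D, v, I]]` of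
the Jacobian `J_F` of the maximum-entropy system with respect to `(P, μ, w)`. -/
noncomputable def jacL (m n : ℕ) (B : Matrix (Fin m) (Fin n) ℝ) (Q : Fin m → ℝ)
    (E : ℝ) (P : Fin n → ℝ) (μ : ℝ) (w : Fin m → ℝ) :
    Matrix (Fin n ⊕ (Unit ⊕ Fin m)) (Fin n ⊕ (Unit ⊕ Fin m)) ℝ :=
  let r := B.mulVec P - Q
  let σ : ℝ := ∑ i : Fin m, Real.exp (-μ * (r i) ^ 2)
  let A := Bᵀ * Matrix.diagonal w * B
  let s : ℝ := ∑ i : Fin m, (r i) ^ 2 * Real.exp (-μ * (r i) ^ 2) * (E - (r i) ^ 2)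
  let v : Fin m → ℝ := fun k => (1 / σ ^ 2) * Real.exp (-μ * (r k) ^ 2) *
    (σ * (r k) ^ 2 - ∑ i : Fin m, (r i) ^ 2 * Real.exp (-μ * (r i) ^ 2))
  Matrix.fromBlocks A 0
    (Matrix.of fun i j =>
      Sum.elim (fun _ : Unit => jacd m n B Q E P μ j) (fun k => jacD m n B Q P μ k j) i)
    (Matrix.fromBlocks (Matrix.of fun _ _ => s) 0
      (Matrix.of fun k _ => v k) (1 : Matrix (Fin m) (Fin m) ℝ))

/-- The strictly block upper-triangular part `U = [[0, 0, C], [0, 0, 0], [0, 0, 0]]`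
of the Jacobian `J_F`, where `C = Bᵀ diag(r)` with `r = BP − Q`. -/
noncomputable def jacU (m n : ℕ) (B : Matrix (Fin m) (Fin n) ℝ) (Q : Fin m → ℝ)
    (P : Fin n → ℝ) :
    Matrix (Fin n ⊕ (Unit ⊕ Fin m)) (Fin n ⊕ (Unit ⊕ Fin m)) ℝ :=
  let r := B.mulVec P - Q
  let C := Bᵀ * Matrix.diagonal r
  Matrix.fromBlocks 0
    (Matrix.of fun i j => Sum.elim (fun _ : Unit => (0 : ℝ)) (fun k => C i k) j)
    0 0


lemma aux_inv {n m : ℕ} (A : Matrix (Fin n) (Fin n) ℝ) (hA : IsUnit A.det)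
    (s : ℝ) (hs : s ≠ 0) (v : Fin m → ℝ) :
    (Matrix.fromBlocks A 0 0
      (Matrix.fromBlocks (Matrix.of fun (_ : Unit) (_ : Unit) => s) 0
        (Matrix.of fun (k : Fin m) (_ : Unit) => v k)
        (1 : Matrix (Fin m) (Fin m) ℝ)))⁻¹ =
    Matrix.fromBlocks A⁻¹ 0 0
      (Matrix.fromBlocks (Matrix.of fun (_ : Unit) (_ : Unit) => s⁻¹) 0
        (Matrix.of fun (k : Fin m) (_ : Unit) => -(v k * s⁻¹)) (1 : Matrix (Fin m) (Fin m) ℝ)) := by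
  apply Matrix.inv_eq_right_inv
  rw [Matrix.fromBlocks_multiply, Matrix.fromBlocks_multiply]
  have h1 : (Matrix.of fun (_ : Unit) (_ : Unit) => s) * (Matrix.of (fun (_ : Unit) (_ : Unit) => s⁻¹)) = 1 := by
    ext i j
    simp [Matrix.mul_apply, Matrix.one_apply, Subsingleton.elim i j, mul_inv_cancel₀ hs]
  have h2 : (Matrix.of fun (k : Fin m) (_ : Unit) => v k) * (Matrix.of (fun (_ : Unit) (_ : Unit) => s⁻¹))
      + (Matrix.of fun (k : Fin m) (_ : Unit) => -(v k * s⁻¹)) = 0 := by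
    ext i j
    simp [Matrix.mul_apply]
  simp [Matrix.mul_nonsing_inv A hA, h1, h2, ← Matrix.fromBlocks_one]

/-- At the ordinary least-squares point
`(P*, μ*, w*) = (P*, 0, (1/m,…,1/m))` with parameter `E = MSEuw`, the Jacobian
blocks satisfy `dᵀ = 2(r*)ᵀB = 0ᵀ` and `D = 0`; the Gauss–Seidel iteration
matrix `G = −L⁻¹U` has zero bottom-right block `G33`, is nilpotent, and its
spectral radius is `0`. -/
theorem stmt_16 (m n : ℕ) (hm : 0 < m) (hn : 0 < n)
    (B : Matrix (Fin m) (Fin n) ℝ) (Q : Fin m → ℝ)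
    (hB : IsUnit (Bᵀ * B).det)
    (Pstar : Fin n → ℝ) (hP : Pstar = ((Bᵀ * B)⁻¹ * Bᵀ).mulVec Q)
    (rstar : Fin m → ℝ) (hr : rstar = B.mulVec Pstar - Q)
    (MSEuw : ℝ) (hM : MSEuw = (1 / (m : ℝ)) * ∑ i : Fin m, (rstar i) ^ 2)
    (hres : ¬ ∀ i j : Fin m, |rstar i| = |rstar j|)
    (G : Matrix (Fin n ⊕ (Unit ⊕ Fin m)) (Fin n ⊕ (Unit ⊕ Fin m)) ℝ)
    (hG : G = -((jacL m n B Q MSEuw Pstar 0 (fun _ => 1 / (m : ℝ)))⁻¹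
      * jacU m n B Q Pstar)) :
    jacd m n B Q MSEuw Pstar 0 = Matrix.vecMul (fun i => 2 * rstar i) B ∧
    Matrix.vecMul (fun i => 2 * rstar i) B = 0 ∧
    jacD m n B Q Pstar 0 = 0 ∧
    (∀ j k : Fin m, G (Sum.inr (Sum.inr j)) (Sum.inr (Sum.inr k)) = 0) ∧
    IsNilpotent G ∧
    spectralRadius ℂ (G.map (algebraMap ℝ ℂ)) = 0 := by
  have hm' : (m : ℝ) ≠ 0 := Nat.cast_ne_zero.mpr hm.ne'
  -- Step 1: d at μ = 0
  have hri : ∀ i, (B.mulVec Pstar) i - Q i = rstar i := fun i => by rw [hr]; simp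
  have hd1 : jacd m n B Q MSEuw Pstar 0 = Matrix.vecMul (fun i => 2 * rstar i) B := by
    simp only [jacd]
    rw [← hr]
    simp
  -- Step 2: Bᵀ r* = 0
  have hkey : (Bᵀ * B) * ((Bᵀ * B)⁻¹ * Bᵀ) = Bᵀ := by
    rw [← Matrix.mul_assoc, Matrix.mul_nonsing_inv _ hB, Matrix.one_mul]
  have hBr : Matrix.vecMul rstar B = 0 := by
    rw [← Matrix.mulVec_transpose, hr, Matrix.mulVec_sub, hP,
      Matrix.mulVec_mulVec, Matrix.mulVec_mulVec, hkey, sub_self]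
  have hd2 : Matrix.vecMul (fun i => 2 * rstar i) B = 0 := by
    have h2r : (fun i => 2 * rstar i) = (2 : ℝ) • rstar := by funext i; simp
    rw [h2r, Matrix.smul_vecMul, hBr, smul_zero]
  -- Step 3: D at μ = 0
  have hD0 : jacD m n B Q Pstar 0 = 0 := by
    simp [jacD]
  -- Step 4: structure of L
  have hd0 : jacd m n B Q MSEuw Pstar 0 = 0 := hd1.trans hd2
  set w : Fin m → ℝ := fun _ => 1 / (m : ℝ) with hw
  set sval : ℝ := ∑ i : Fin m, (rstar i) ^ 2 * (MSEuw - (rstar i) ^ 2) with hsval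
  set vval : Fin m → ℝ := fun k => (1 / ((m : ℝ)) ^ 2) *
    ((m : ℝ) * (rstar k) ^ 2 - ∑ i : Fin m, (rstar i) ^ 2) with hvval
  have hL : jacL m n B Q MSEuw Pstar 0 w =
      Matrix.fromBlocks (Bᵀ * Matrix.diagonal w * B) 0 0
        (Matrix.fromBlocks (Matrix.of fun (_ : Unit) (_ : Unit) => sval) 0
          (Matrix.of fun (k : Fin m) (_ : Unit) => vval k) 1) := by
    ext i j
    cases i with
    | inl i =>
      cases j with
      | inl j => simp [jacL]
      | inr j => cases j <;> simp [jacL]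
    | inr i =>
      cases i with
      | inl i =>
        cases j with
        | inl j => simp [jacL, hd0]
        | inr j => cases j <;> simp [jacL, hsval, hri, Finset.card_univ]
      | inr i =>
        cases j with
        | inl j => simp [jacL, hD0]
        | inr j => cases j <;> simp [jacL, hvval, hri, Finset.card_univ]
  -- invertibility of A
  have hdiag : Matrix.diagonal w = (1 / (m : ℝ)) • (1 : Matrix (Fin m) (Fin m) ℝ) := by
    ext i j
    by_cases h : i = j <;> simp [Matrix.diagonal_apply, Matrix.one_apply, h, hw]
  have hAeq : Bᵀ * Matrix.diagonal w * B = (1 / (m : ℝ)) • (Bᵀ * B) := by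
    rw [hdiag, Matrix.mul_smul, Matrix.mul_one, Matrix.smul_mul]
  have hA : IsUnit (Bᵀ * Matrix.diagonal w * B).det := by
    rw [hAeq, Matrix.det_smul]
    exact (isUnit_iff_ne_zero.mpr (pow_ne_zero _ (by positivity))).mul hB
  -- sval ≠ 0
  have hsum : ∑ i : Fin m, (rstar i) ^ 2 = (m : ℝ) * MSEuw := by
    rw [hM]; field_simp
  have hkey2 : sval = -∑ i : Fin m, ((rstar i) ^ 2 - MSEuw) ^ 2 := by
    calc sval = ∑ i : Fin m, (-(((rstar i) ^ 2 - MSEuw) ^ 2)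
          + (MSEuw ^ 2 - MSEuw * (rstar i) ^ 2)) := by
          rw [hsval]; exact Finset.sum_congr rfl fun i _ => by ring
    _ = (∑ i : Fin m, -(((rstar i) ^ 2 - MSEuw) ^ 2))
          + ((m : ℝ) * MSEuw ^ 2 - MSEuw * ∑ i : Fin m, (rstar i) ^ 2) := by
          rw [Finset.sum_add_distrib, Finset.sum_sub_distrib, ← Finset.mul_sum,
            Finset.sum_const, Finset.card_univ, Fintype.card_fin, nsmul_eq_mul]
    _ = -∑ i : Fin m, ((rstar i) ^ 2 - MSEuw) ^ 2 := by
          rw [hsum, Finset.sum_neg_distrib]; ring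
  push_neg at hres
  obtain ⟨i0, j0, hij⟩ := hres
  have hij2 : (rstar i0) ^ 2 ≠ (rstar j0) ^ 2 := by
    intro h; apply hij
    rw [← Real.sqrt_sq_eq_abs, ← Real.sqrt_sq_eq_abs, h]
  have hpos : 0 < ∑ k : Fin m, ((rstar k) ^ 2 - MSEuw) ^ 2 := by
    have hwit : ∃ k ∈ Finset.univ (α := Fin m), 0 < ((rstar k) ^ 2 - MSEuw) ^ 2 := by
      rcases ne_or_eq ((rstar i0) ^ 2) MSEuw with h | h
      · exact ⟨i0, Finset.mem_univ _,
          lt_of_le_of_ne (sq_nonneg _) (Ne.symm (pow_ne_zero 2 (sub_ne_zero.mpr h)))⟩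
      · refine ⟨j0, Finset.mem_univ _,
          lt_of_le_of_ne (sq_nonneg _) (Ne.symm (pow_ne_zero 2 (sub_ne_zero.mpr ?_)))⟩
        exact fun hc => hij2 (h.trans hc.symm)
    exact Finset.sum_pos' (fun k _ => sq_nonneg _) hwit
  have hs : sval ≠ 0 := by
    rw [hkey2]; exact neg_ne_zero.mpr hpos.ne'
  -- inverse of L
  have hLinv := aux_inv (Bᵀ * Matrix.diagonal w * B) hA sval hs vval
  -- shape of G
  set Cm : Matrix (Fin n) (Unit ⊕ Fin m) ℝ := Matrix.of fun i j =>
    Sum.elim (fun _ : Unit => (0 : ℝ))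
      (fun k => (Bᵀ * Matrix.diagonal (B.mulVec Pstar - Q)) i k) j with hCm
  have hGeq : G = Matrix.fromBlocks 0 (-((Bᵀ * Matrix.diagonal w * B)⁻¹ * Cm)) 0 0 := by
    rw [hG, hL, hLinv, jacU]
    rw [Matrix.fromBlocks_multiply]
    ext i j
    cases i <;> cases j <;> simp [hCm]
  have hG33 : ∀ j k : Fin m, G (Sum.inr (Sum.inr j)) (Sum.inr (Sum.inr k)) = 0 := by
    intro j k
    rw [hGeq]
    simp
  have hG2 : G ^ 2 = 0 := by
    rw [hGeq, pow_two, Matrix.fromBlocks_multiply]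
    simp
  have hnil : IsNilpotent G := ⟨2, hG2⟩
  refine ⟨hd1, hd2, hD0, hG33, hnil, ?_⟩
  -- spectral radius
  have hnilC : IsNilpotent (G.map (algebraMap ℝ ℂ)) := by
    refine ⟨2, ?_⟩
    rw [pow_two, ← Matrix.map_mul, ← pow_two, hG2]
    simp
  have hspec : spectrum ℂ (G.map (algebraMap ℝ ℂ)) ⊆ {0} := by
    intro k hk
    by_contra hk0
    refine spectrum.mem_iff.mp hk ?_
    have hrw : algebraMap ℂ _ k - G.map (algebraMap ℝ ℂ) =
        algebraMap ℂ _ k + (-(G.map (algebraMap ℝ ℂ))) := by rw [sub_eq_add_neg]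
    rw [hrw]
    exact hnilC.neg.isUnit_add_left_of_commute
      ((isUnit_iff_ne_zero.mpr hk0).map (algebraMap ℂ _))
      (Algebra.commute_algebraMap_right _ _)
  rw [spectralRadius]
  refine le_antisymm ?_ zero_le
  refine iSup₂_le fun k hk => ?_
  have := hspec hk
  simp only [Set.mem_singleton_iff] at this
  simp [this]
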